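/- Let u : E → ℝ be measurable with P_t|u| < ∞ pointwise for all t ≥ 0. If σ and τ are finite partitions of ℝ₊ (both containing 0) with σ ⊆ τ, then u₁^σ ≤ u₁^τ and u₂^σ ≤ u₂^τ pointwise; in particular V_σ(u) ≤ V_τ(u) pointwise. -/

import Mathlib

open MeasureTheory ProbabilityTheory ENNReal Filter
open scoped NNReal

/-- A sub-Markovian semigroup of kernels on a measurable space `E`. -/
structure SubMarkovSemigroup (E : Type*) [MeasurableSpace E] where
  P : ℝ≥0 → Kernel E E
  subMarkov : ∀ t x, P t x Set.univ ≤ 1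
  map_zero : ∀ (f : E → ℝ≥0∞), Measurable f → ∀ x, ∫⁻ y, f y ∂(P 0 x) = f x
  map_add : ∀ (t s : ℝ≥0) (f : E → ℝ≥0∞), Measurable f → ∀ x,
      ∫⁻ y, f y ∂(P (t + s) x) = ∫⁻ y, ∫⁻ z, f z ∂(P s y) ∂(P t x)

/-- Action of the time-`t` kernel on real-valued functions: `P_t f = P_t f⁺ - P_t f⁻`. -/
noncomputable def SubMarkovSemigroup.act {E : Type*} [MeasurableSpace E]
    (S : SubMarkovSemigroup E) (t : ℝ≥0) (f : E → ℝ) (x : E) : ℝ :=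
  ∫ y, f y ∂(S.P t x)

/-- A finite partition `0 = t_0 ≤ t_1 ≤ … ≤ t_n < ∞` of `ℝ₊`. -/
structure FinPartition where
  n : ℕ
  t : Fin (n + 1) → ℝ≥0
  mono : Monotone t
  first : t 0 = 0

/-- `V_τ(u) = Σ_{i=1}^n P_{t_{i-1}} |u - P_{t_i - t_{i-1}} u| + P_{t_n}|u|`. -/
noncomputable def SubMarkovSemigroup.V {E : Type*} [MeasurableSpace E]
    (S : SubMarkovSemigroup E) (u : E → ℝ) (τ : FinPartition) (x : E) : ℝ :=
  (∑ i : Fin τ.n, S.act (τ.t i.castSucc)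
      (fun y => |u y - S.act (τ.t i.succ - τ.t i.castSucc) u y|) x)
  + S.act (τ.t (Fin.last τ.n)) (fun y => |u y|) x

/-- `u₁^τ = Σ_{i=1}^n P_{t_{i-1}} (u - P_{t_i - t_{i-1}} u)⁺ + P_{t_n} u⁺`. -/
noncomputable def SubMarkovSemigroup.uPos {E : Type*} [MeasurableSpace E]
    (S : SubMarkovSemigroup E) (u : E → ℝ) (τ : FinPartition) (x : E) : ℝ :=
  (∑ i : Fin τ.n, S.act (τ.t i.castSucc)
      (fun y => max (u y - S.act (τ.t i.succ - τ.t i.castSucc) u y) 0) x)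
  + S.act (τ.t (Fin.last τ.n)) (fun y => max (u y) 0) x

/-- `u₂^τ = Σ_{i=1}^n P_{t_{i-1}} (u - P_{t_i - t_{i-1}} u)⁻ + P_{t_n} u⁻`. -/
noncomputable def SubMarkovSemigroup.uNeg {E : Type*} [MeasurableSpace E]
    (S : SubMarkovSemigroup E) (u : E → ℝ) (τ : FinPartition) (x : E) : ℝ :=
  (∑ i : Fin τ.n, S.act (τ.t i.castSucc)
      (fun y => max (-(u y - S.act (τ.t i.succ - τ.t i.castSucc) u y)) 0) x)
  + S.act (τ.t (Fin.last τ.n)) (fun y => max (-u y) 0) x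


namespace SubMarkovSemigroup

variable {E : Type*} [MeasurableSpace E]

/-- The class of functions to which all our lemmas apply. -/
def Good (S : SubMarkovSemigroup E) (f : E → ℝ) : Prop :=
  Measurable f ∧ ∀ (t : ℝ≥0) (x : E), Integrable f (S.P t x)

variable {S : SubMarkovSemigroup E}

theorem finiteKernel (S : SubMarkovSemigroup E) (t : ℝ≥0) : IsFiniteKernel (S.P t) :=
  ⟨⟨1, ENNReal.one_lt_top, fun x => S.subMarkov t x⟩⟩

theorem P_zero_eq (x : E) : S.P 0 x = Measure.dirac x := by
  ext s hs
  have := S.map_zero (s.indicator 1) (measurable_one.indicator hs) x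
  rw [lintegral_indicator_one hs] at this
  rw [this, Measure.dirac_apply' _ hs]

theorem act_zero {f : E → ℝ} (hf : S.Good f) (x : E) : S.act 0 f x = f x := by
  rw [SubMarkovSemigroup.act, P_zero_eq, integral_dirac' _ _ hf.1.stronglyMeasurable]

theorem Good.act {f : E → ℝ} (hf : S.Good f) (t : ℝ≥0) : S.Good (S.act t f) := by
  haveI := finiteKernel S
  have hm : Measurable (S.act t f) :=
    (StronglyMeasurable.integral_kernel_prod_right (κ := S.P t) (f := fun _ y => f y)
      (hf.1.stronglyMeasurable.comp_measurable measurable_snd)).measurable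
  refine ⟨hm, fun s x => ⟨hm.aestronglyMeasurable, ?_⟩⟩
  rw [HasFiniteIntegral]
  calc ∫⁻ y, ‖S.act t f y‖₊ ∂(S.P s x)
      ≤ ∫⁻ y, ∫⁻ z, ‖f z‖₊ ∂(S.P t y) ∂(S.P s x) :=
        lintegral_mono fun y => enorm_integral_le_lintegral_enorm _
    _ = ∫⁻ z, ‖f z‖₊ ∂(S.P (s + t) x) := (S.map_add s t _ hf.1.enorm x).symm
    _ < ∞ := (hf.2 (s + t) x).2

theorem act_mono {f g : E → ℝ} (hf : S.Good f) (hg : S.Good g) (h : ∀ y, f y ≤ g y)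
    (t : ℝ≥0) (x : E) : S.act t f x ≤ S.act t g x :=
  integral_mono (hf.2 t x) (hg.2 t x) h

theorem act_nonneg {f : E → ℝ} (h : ∀ y, 0 ≤ f y) (t : ℝ≥0) (x : E) : 0 ≤ S.act t f x :=
  integral_nonneg h

theorem act_add {f g : E → ℝ} (hf : S.Good f) (hg : S.Good g) (t : ℝ≥0) (x : E) :
    S.act t (fun y => f y + g y) x = S.act t f x + S.act t g x :=
  integral_add (hf.2 t x) (hg.2 t x)

theorem act_sub {f g : E → ℝ} (hf : S.Good f) (hg : S.Good g) (t : ℝ≥0) (x : E) :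
    S.act t (fun y => f y - g y) x = S.act t f x - S.act t g x :=
  integral_sub (hf.2 t x) (hg.2 t x)

theorem Good.sub {f g : E → ℝ} (hf : S.Good f) (hg : S.Good g) :
    S.Good (fun y => f y - g y) :=
  ⟨hf.1.sub hg.1, fun t x => (hf.2 t x).sub (hg.2 t x)⟩

theorem Good.posPart {f : E → ℝ} (hf : S.Good f) : S.Good (fun y => max (f y) 0) :=
  ⟨hf.1.max measurable_const, fun t x => (hf.2 t x).pos_part⟩

theorem Good.addG {f g : E → ℝ} (hf : S.Good f) (hg : S.Good g) :
    S.Good (fun y => f y + g y) :=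
  ⟨hf.1.add hg.1, fun t x => (hf.2 t x).add (hg.2 t x)⟩

theorem Good.negG {f : E → ℝ} (hf : S.Good f) : S.Good (fun y => -f y) :=
  ⟨hf.1.neg, fun t x => (hf.2 t x).neg⟩

theorem act_neg (t : ℝ≥0) (f : E → ℝ) (x : E) :
    S.act t (fun y => -f y) x = -S.act t f x :=
  integral_neg _

/-- The semigroup property for real-valued integrands. -/
theorem act_act {f : E → ℝ} (hf : S.Good f) (a b : ℝ≥0) (x : E) :
    S.act (a + b) f x = S.act a (S.act b f) x := by
  haveI := finiteKernel S
  obtain ⟨hmeas, hint⟩ := hf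
  set A : E → ℝ≥0∞ := fun y => ∫⁻ z, ENNReal.ofReal (f z) ∂(S.P b y) with hA
  set B : E → ℝ≥0∞ := fun y => ∫⁻ z, ENNReal.ofReal (-(f z)) ∂(S.P b y) with hB
  have hfp : Measurable fun z => ENNReal.ofReal (f z) := ENNReal.measurable_ofReal.comp hmeas
  have hfn : Measurable fun z => ENNReal.ofReal (-(f z)) :=
    ENNReal.measurable_ofReal.comp hmeas.neg
  have hAm : Measurable A := Measurable.lintegral_kernel hfp
  have hBm : Measurable B := Measurable.lintegral_kernel hfn
  have hAfin : ∀ y, A y < ∞ := fun y =>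
    lt_of_le_of_lt (lintegral_mono fun z => Real.ofReal_le_enorm _) (hint b y).2
  have hBfin : ∀ y, B y < ∞ := fun y =>
    lt_of_le_of_lt (lintegral_mono fun z => (Real.ofReal_le_enorm _).trans_eq (by simp))
      (hint b y).2
  have hIA : ∫⁻ y, A y ∂(S.P a x) = ∫⁻ z, ENNReal.ofReal (f z) ∂(S.P (a + b) x) :=
    (S.map_add a b _ hfp x).symm
  have hIB : ∫⁻ y, B y ∂(S.P a x) = ∫⁻ z, ENNReal.ofReal (-(f z)) ∂(S.P (a + b) x) :=
    (S.map_add a b _ hfn x).symm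
  have hfinA : ∫⁻ y, A y ∂(S.P a x) < ∞ := by
    rw [hIA]
    exact lt_of_le_of_lt (lintegral_mono fun z => Real.ofReal_le_enorm _) (hint (a+b) x).2
  have hfinB : ∫⁻ y, B y ∂(S.P a x) < ∞ := by
    rw [hIB]
    exact lt_of_le_of_lt (lintegral_mono fun z => (Real.ofReal_le_enorm _).trans_eq (by simp))
      (hint (a+b) x).2
  have intA : Integrable (fun y => (A y).toReal) (S.P a x) := by
    refine ⟨(hAm.ennreal_toReal).aestronglyMeasurable, ?_⟩
    rw [HasFiniteIntegral]
    calc ∫⁻ y, ‖(A y).toReal‖₊ ∂(S.P a x) = ∫⁻ y, A y ∂(S.P a x) := by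
          refine lintegral_congr fun y => ?_
          rw [← enorm_eq_nnnorm, Real.enorm_eq_ofReal ENNReal.toReal_nonneg, ENNReal.ofReal_toReal (hAfin y).ne]
      _ < ∞ := hfinA
  have intB : Integrable (fun y => (B y).toReal) (S.P a x) := by
    refine ⟨(hBm.ennreal_toReal).aestronglyMeasurable, ?_⟩
    rw [HasFiniteIntegral]
    calc ∫⁻ y, ‖(B y).toReal‖₊ ∂(S.P a x) = ∫⁻ y, B y ∂(S.P a x) := by
          refine lintegral_congr fun y => ?_
          rw [← enorm_eq_nnnorm, Real.enorm_eq_ofReal ENNReal.toReal_nonneg, ENNReal.ofReal_toReal (hBfin y).ne]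
      _ < ∞ := hfinB
  have key : S.act a (S.act b f) x = ∫ y, ((A y).toReal - (B y).toReal) ∂(S.P a x) := by
    refine integral_congr_ae (Filter.Eventually.of_forall fun y => ?_)
    exact integral_eq_lintegral_pos_part_sub_lintegral_neg_part (hint b y)
  rw [key, integral_sub intA intB,
    integral_toReal hAm.aemeasurable (Filter.Eventually.of_forall hAfin),
    integral_toReal hBm.aemeasurable (Filter.Eventually.of_forall hBfin), hIA, hIB,
    ← integral_eq_lintegral_pos_part_sub_lintegral_neg_part (hint (a+b) x)]
  rfl

theorem max_add_zero (a b : ℝ) : max (a + b) 0 ≤ max a 0 + max b 0 :=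
  max_le (add_le_add (le_max_left _ _) (le_max_left _ _))
    (add_nonneg (le_max_right _ _) (le_max_right _ _))

theorem max_act_le {f : E → ℝ} (hf : S.Good f) (t : ℝ≥0) (x : E) :
    max (S.act t f x) 0 ≤ S.act t (fun y => max (f y) 0) x :=
  max_le (act_mono hf hf.posPart (fun y => le_max_left _ _) t x)
    (act_nonneg (fun y => le_max_right _ _) t x)

/-- Key splitting inequality: `(u - P_{a+b}u)⁺ ≤ (u - P_a u)⁺ + P_a (u - P_b u)⁺`. -/
theorem split_ineq {u : E → ℝ} (hu : S.Good u) (a b : ℝ≥0) (y : E) :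
    max (u y - S.act (a + b) u y) 0 ≤
      max (u y - S.act a u y) 0
        + S.act a (fun z => max (u z - S.act b u z) 0) y := by
  have h1 : u y - S.act (a + b) u y
      = (u y - S.act a u y) + S.act a (fun z => u z - S.act b u z) y := by
    rw [act_sub hu (hu.act b) a y, act_act hu a b y]; ring
  rw [h1]
  refine (max_add_zero _ _).trans (add_le_add_right ?_ _)
  exact max_act_le (hu.sub (hu.act b)) a y

/-- Tail inequality: `u⁺ ≤ (u - P_d u)⁺ + P_d u⁺`. -/
theorem tail_ineq {u : E → ℝ} (hu : S.Good u) (d : ℝ≥0) (y : E) :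
    max (u y) 0 ≤ max (u y - S.act d u y) 0 + S.act d (fun z => max (u z) 0) y := by
  have h1 : u y = (u y - S.act d u y) + S.act d u y := by ring
  calc max (u y) 0 = max ((u y - S.act d u y) + S.act d u y) 0 := by rw [← h1]
    _ ≤ max (u y - S.act d u y) 0 + max (S.act d u y) 0 := max_add_zero _ _
    _ ≤ _ := add_le_add_right (max_act_le hu d y) _

variable (S) in
/-- The refinement functional, defined by recursion on the list of partition points,
relative to a base point `p`. -/
noncomputable def Gfun (u : E → ℝ) : ℝ≥0 → List ℝ≥0 → E → ℝ
  | _, [] => fun y => max (u y) 0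
  | p, q :: l => fun y => max (u y - S.act (q - p) u y) 0 + S.act (q - p) (Gfun u q l) y

theorem gfun_nil (u : E → ℝ) (p : ℝ≥0) : Gfun S u p ([]) = fun y => max (u y) 0 := rfl

theorem gfun_cons (u : E → ℝ) (p q : ℝ≥0) (l : List ℝ≥0) :
    Gfun S u p (q :: l) = fun y =>
      max (u y - S.act (q - p) u y) 0 + S.act (q - p) (Gfun S u q l) y := rfl

theorem Good.gfun {u : E → ℝ} (hu : S.Good u) :
    ∀ (l : List ℝ≥0) (p : ℝ≥0), S.Good (Gfun S u p l)
  | [], _ => hu.posPart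
  | q :: l, p => by
      rw [gfun_cons]
      exact ((hu.sub (hu.act _)).posPart).addG ((Good.gfun hu l q).act _)

theorem gfun_ge {u : E → ℝ} (hu : S.Good u) :
    ∀ (l : List ℝ≥0) (p : ℝ≥0), List.Chain (· ≤ ·) p l →
      ∀ y, max (u y) 0 ≤ Gfun S u p l y
  | [], _, _, y => le_refl _
  | q :: l, p, hc, y => by
      rcases List.chain_cons.1 hc with ⟨_, hc'⟩
      calc max (u y) 0
          ≤ max (u y - S.act (q - p) u y) 0
              + S.act (q - p) (fun z => max (u z) 0) y := tail_ineq hu _ y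
        _ ≤ max (u y - S.act (q - p) u y) 0
              + S.act (q - p) (Gfun S u q l) y :=
            add_le_add_right
              (act_mono hu.posPart (hu.gfun l q) (gfun_ge hu l q hc') _ y) _
        _ = Gfun S u p (q :: l) y := rfl

theorem gfun_cons_self {u : E → ℝ} (hu : S.Good u) (p : ℝ≥0) (l : List ℝ≥0) (y : E) :
    Gfun S u p (p :: l) y = Gfun S u p l y := by
  rw [gfun_cons, tsub_self]
  simp only [act_zero hu y, act_zero (hu.gfun l p) y, sub_self, max_self, zero_add]

theorem gfun_mono {u : E → ℝ} (hu : S.Good u) : ∀ (N : ℕ) (l₁ l₂ : List ℝ≥0) (p : ℝ≥0),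
    l₁.length + l₂.length ≤ N →
    List.Chain (· ≤ ·) p l₁ → List.Chain (· ≤ ·) p l₂ →
    (∀ a ∈ l₁, a ∈ l₂ ∨ a = p) → ∀ y, Gfun S u p l₁ y ≤ Gfun S u p l₂ y := by
  intro N
  induction N with
  | zero =>
    intro l₁ l₂ p hlen h1 h2 _ y
    cases l₁ with
    | nil => exact gfun_ge hu l₂ p h2 y
    | cons q l₁' => simp at hlen
  | succ N ih =>
    intro l₁ l₂ p hlen h1 h2 hsub y
    cases l₁ with
    | nil => exact gfun_ge hu l₂ p h2 y
    | cons q l₁' =>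
      rcases List.chain_cons.1 h1 with ⟨hpq, hc1⟩
      by_cases hqp : q = p
      · subst hqp
        rw [gfun_cons_self hu q l₁' y]
        refine ih l₁' l₂ q ?_ hc1 h2 (fun a ha => hsub a (List.mem_cons_of_mem _ ha)) y
        simp only [List.length_cons] at hlen; omega
      · have hq2 : q ∈ l₂ := (hsub q List.mem_cons_self).resolve_right hqp
        cases l₂ with
        | nil => exact absurd hq2 List.not_mem_nil
        | cons r l₂' =>
          rcases List.chain_cons.1 h2 with ⟨hpr, hc2⟩
          by_cases hrp : r = p
          · subst hrp
            rw [gfun_cons_self hu r l₂' y]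
            refine ih (q :: l₁') l₂' r ?_ h1 hc2 ?_ y
            · simp only [List.length_cons] at hlen ⊢; omega
            · intro a ha
              rcases hsub a ha with h | h
              · rcases List.mem_cons.1 h with h' | h'
                · exact Or.inr h'
                · exact Or.inl h'
              · exact Or.inr h
          · have hpltq : p < q := lt_of_le_of_ne hpq (Ne.symm hqp)
            have hrq : r ≤ q := by
              rcases List.mem_cons.1 hq2 with h | h
              · exact h.ge
              · exact List.rel_of_pairwise_cons (List.isChain_iff_pairwise.1 hc2) h
            have hsub' : ∀ a ∈ q :: l₁', a ∈ l₂' ∨ a = r := by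
              intro a ha
              rcases List.mem_cons.1 ha with rfl | ha'
              · rcases List.mem_cons.1 hq2 with h | h
                · exact Or.inr h
                · exact Or.inl h
              · rcases hsub a (List.mem_cons_of_mem _ ha') with h | rfl
                · rcases List.mem_cons.1 h with h' | h'
                  · exact Or.inr h'
                  · exact Or.inl h'
                · exact absurd
                    (hpltq.trans_le
                      (List.rel_of_pairwise_cons (List.isChain_iff_pairwise.1 hc1) ha'))
                    (lt_irrefl a)
            have hrec : ∀ z, Gfun S u r (q :: l₁') z ≤ Gfun S u r l₂' z := by
              intro z
              refine ih (q :: l₁') l₂' r ?_ (List.chain_cons.2 ⟨hrq, hc1⟩) hc2 hsub' z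
              simp only [List.length_cons] at hlen ⊢; omega
            have hq_split : q - p = (r - p) + (q - r) := by
              rw [add_comm, tsub_add_tsub_cancel hrq hpr]
            have split1 : max (u y - S.act (q - p) u y) 0 ≤
                max (u y - S.act (r - p) u y) 0
                  + S.act (r - p) (fun z => max (u z - S.act (q - r) u z) 0) y := by
              have h := split_ineq hu (r - p) (q - r) y
              rwa [← hq_split] at h
            have expand : Gfun S u r (q :: l₁') = fun z =>
                max (u z - S.act (q - r) u z) 0 + S.act (q - r) (Gfun S u q l₁') z := rfl
            have hacts : S.act (r - p) (Gfun S u r (q :: l₁')) y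
                = S.act (r - p) (fun z => max (u z - S.act (q - r) u z) 0) y
                  + S.act (q - p) (Gfun S u q l₁') y := by
              rw [expand,
                act_add ((hu.sub (hu.act _)).posPart) ((hu.gfun l₁' q).act _) _ y,
                hq_split, act_act (hu.gfun l₁' q) (r - p) (q - r) y]
            calc Gfun S u p (q :: l₁') y
                = max (u y - S.act (q - p) u y) 0 + S.act (q - p) (Gfun S u q l₁') y := rfl
              _ ≤ (max (u y - S.act (r - p) u y) 0
                    + S.act (r - p) (fun z => max (u z - S.act (q - r) u z) 0) y)
                    + S.act (q - p) (Gfun S u q l₁') y := add_le_add_left split1 _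
              _ = max (u y - S.act (r - p) u y) 0
                    + S.act (r - p) (Gfun S u r (q :: l₁')) y := by rw [hacts]; ring
              _ ≤ max (u y - S.act (r - p) u y) 0
                    + S.act (r - p) (Gfun S u r l₂') y :=
                  add_le_add_right
                    (act_mono (hu.gfun _ _) (hu.gfun _ _) hrec _ y) _
              _ = Gfun S u p (r :: l₂') y := rfl

variable (S) in
/-- Same functional, in "flat sum" form. -/
noncomputable def Sfun (u : E → ℝ) : ℝ≥0 → List ℝ≥0 → E → ℝ
  | p, [] => fun x => S.act p (fun y => max (u y) 0) x
  | p, q :: l => fun x =>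
      S.act p (fun y => max (u y - S.act (q - p) u y) 0) x + Sfun u q l x

theorem sfun_eq_gfun {u : E → ℝ} (hu : S.Good u) :
    ∀ (l : List ℝ≥0) (p : ℝ≥0), List.Chain (· ≤ ·) p l →
      ∀ x, Sfun S u p l x = S.act p (Gfun S u p l) x
  | [], p, _, x => rfl
  | q :: l, p, hc, x => by
    rcases List.chain_cons.1 hc with ⟨hpq, hc'⟩
    have h1 : Sfun S u p (q :: l) x
        = S.act p (fun y => max (u y - S.act (q - p) u y) 0) x + Sfun S u q l x := rfl
    rw [h1, sfun_eq_gfun hu l q hc' x]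
    have h2 : S.act q (Gfun S u q l) x = S.act p (S.act (q - p) (Gfun S u q l)) x := by
      rw [← act_act (hu.gfun l q) p (q - p) x, add_tsub_cancel_of_le hpq]
    rw [h2, ← act_add ((hu.sub (hu.act _)).posPart) ((hu.gfun l q).act _) p x]
    rfl

theorem sum_eq_sfun (u : E → ℝ) :
    ∀ (n : ℕ) (t : Fin (n + 1) → ℝ≥0) (x : E),
    (∑ i : Fin n, S.act (t i.castSucc)
        (fun y => max (u y - S.act (t i.succ - t i.castSucc) u y) 0) x)
      + S.act (t (Fin.last n)) (fun y => max (u y) 0) x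
      = Sfun S u (t 0) (List.ofFn (fun i : Fin n => t i.succ)) x := by
  intro n
  induction n with
  | zero =>
    intro t x
    simp only [Finset.univ_eq_empty, Finset.sum_empty, zero_add, List.ofFn_zero]
    rfl
  | succ n ihn =>
    intro t x
    rw [Fin.sum_univ_succ, List.ofFn_succ]
    have key := ihn (fun i => t i.succ) x
    have hcons : Sfun S u (t 0)
        ((t (0 : Fin (n + 1)).succ) :: List.ofFn (fun i : Fin n => t (i.succ : Fin (n+1)).succ)) x
        = S.act (t 0) (fun y => max (u y - S.act (t (0 : Fin (n + 1)).succ - t 0) u y) 0) x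
          + Sfun S u (t (0 : Fin (n + 1)).succ)
              (List.ofFn (fun i : Fin n => t (i.succ : Fin (n+1)).succ)) x := rfl
    simp only [Fin.succ_castSucc, Fin.succ_last] at key
    rw [hcons, ← key, add_assoc]
    simp [Fin.castSucc_zero, Fin.succ_castSucc, -Fin.castSucc_succ]

/-- The list of partition points of `π`, without the leading `0`. -/
noncomputable def plist (π : FinPartition) : List ℝ≥0 :=
  List.ofFn (fun i : Fin π.n => π.t i.succ)

theorem plist_chain (π : FinPartition) : List.Chain (· ≤ ·) 0 (plist π) := by
  rw [List.Chain, List.isChain_iff_pairwise]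
  have : (0 : ℝ≥0) :: plist π = List.ofFn π.t := by
    rw [List.ofFn_succ, π.first]; rfl
  rw [this, List.pairwise_ofFn]
  intro i j hij
  exact π.mono hij.le

theorem uPos_eq_gfun {u : E → ℝ} (hu : S.Good u) (π : FinPartition) (x : E) :
    S.uPos u π x = Gfun S u 0 (plist π) x := by
  rw [SubMarkovSemigroup.uPos, sum_eq_sfun u π.n π.t x, π.first,
    show (List.ofFn fun i : Fin π.n => π.t i.succ) = plist π from rfl,
    sfun_eq_gfun hu _ 0 (plist_chain π) x, act_zero (hu.gfun _ _) x]

theorem plist_mem {σ τ : FinPartition} (hsub : Set.range σ.t ⊆ Set.range τ.t) :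
    ∀ a ∈ plist σ, a ∈ plist τ ∨ a = 0 := by
  intro a ha
  rw [plist, List.mem_ofFn] at ha
  obtain ⟨i, hi⟩ := ha
  obtain ⟨j, hj⟩ := hsub ⟨i.succ, hi⟩
  rcases Fin.eq_zero_or_eq_succ j with rfl | ⟨k, rfl⟩
  · exact Or.inr (by rw [← hj, τ.first])
  · exact Or.inl (by rw [plist, List.mem_ofFn]; exact ⟨k, hj⟩)

theorem uPos_mono {u : E → ℝ} (hu : S.Good u) {σ τ : FinPartition}
    (hsub : Set.range σ.t ⊆ Set.range τ.t) (x : E) : S.uPos u σ x ≤ S.uPos u τ x := by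
  rw [uPos_eq_gfun hu σ x, uPos_eq_gfun hu τ x]
  exact gfun_mono hu ((plist σ).length + (plist τ).length) (plist σ) (plist τ) 0
    le_rfl (plist_chain σ) (plist_chain τ) (plist_mem hsub) x

theorem uNeg_eq_uPos_neg (u : E → ℝ) (π : FinPartition) (x : E) :
    S.uNeg u π x = S.uPos (fun y => -u y) π x := by
  rw [SubMarkovSemigroup.uNeg, SubMarkovSemigroup.uPos]
  congr 1
  apply Finset.sum_congr rfl
  intro i _
  congr 1
  funext y
  rw [show S.act (π.t i.succ - π.t i.castSucc) (fun z => -u z) y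
      = -(S.act (π.t i.succ - π.t i.castSucc) u y) from integral_neg _]
  congr 1
  ring

theorem V_eq_uPos_add_uNeg {u : E → ℝ} (hu : S.Good u) (π : FinPartition) (x : E) :
    S.V u π x = S.uPos u π x + S.uNeg u π x := by
  rw [SubMarkovSemigroup.V, SubMarkovSemigroup.uPos, SubMarkovSemigroup.uNeg]
  have hterm : ∀ i : Fin π.n,
      S.act (π.t i.castSucc) (fun y => |u y - S.act (π.t i.succ - π.t i.castSucc) u y|) x
      = S.act (π.t i.castSucc)
          (fun y => max (u y - S.act (π.t i.succ - π.t i.castSucc) u y) 0) x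
        + S.act (π.t i.castSucc)
          (fun y => max (-(u y - S.act (π.t i.succ - π.t i.castSucc) u y)) 0) x := by
    intro i
    rw [← act_add ((hu.sub (hu.act _)).posPart) (((hu.sub (hu.act _)).negG).posPart)]
    congr 1
    funext y
    rw [max_zero_add_max_neg_zero_eq_abs_self]
  have htail : S.act (π.t (Fin.last π.n)) (fun y => |u y|) x
      = S.act (π.t (Fin.last π.n)) (fun y => max (u y) 0) x
        + S.act (π.t (Fin.last π.n)) (fun y => max (-u y) 0) x := by
    rw [← act_add hu.posPart (hu.negG.posPart)]
    congr 1
    funext y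
    rw [max_zero_add_max_neg_zero_eq_abs_self]
  simp only [hterm, htail, Finset.sum_add_distrib]
  ring

end SubMarkovSemigroup


open SubMarkovSemigroup in
/-- If `σ ⊆ τ` (as sets of partition points) then `u₁^σ ≤ u₁^τ`,
`u₂^σ ≤ u₂^τ` and `V_σ(u) ≤ V_τ(u)` pointwise. -/
theorem statement3 {E : Type*} [MeasurableSpace E] (S : SubMarkovSemigroup E)
    (u : E → ℝ) (hu : Measurable u) (hint : ∀ (t : ℝ≥0) (x : E), Integrable u (S.P t x))
    (σ τ : FinPartition) (hsub : Set.range σ.t ⊆ Set.range τ.t) :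
    (∀ x : E, S.uPos u σ x ≤ S.uPos u τ x) ∧
    (∀ x : E, S.uNeg u σ x ≤ S.uNeg u τ x) ∧
    (∀ x : E, S.V u σ x ≤ S.V u τ x) := by
  have hg : S.Good u := ⟨hu, hint⟩
  have hgn : S.Good (fun y => -u y) := hg.negG
  have h1 : ∀ x : E, S.uPos u σ x ≤ S.uPos u τ x := fun x => uPos_mono hg hsub x
  have h2 : ∀ x : E, S.uNeg u σ x ≤ S.uNeg u τ x := by
    intro x
    rw [uNeg_eq_uPos_neg, uNeg_eq_uPos_neg]
    exact uPos_mono hgn hsub x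
  refine ⟨h1, h2, fun x => ?_⟩
  rw [V_eq_uPos_add_uNeg hg σ x, V_eq_uPos_add_uNeg hg τ x]
  exact add_le_add (h1 x) (h2 x)
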